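/- Suppose t_∞ := lim_{n→∞} (l_1⋯l_n)/(r_1⋯r_n) exists and equals +∞. Then for any non-decreasing sequence of stopping times (T_m)_{m≥1} with E[T_m] < ∞ for every m and T_m → T_∂ almost surely, E[X_{T_m}] → 0 as m → ∞. -/

import Mathlib

open MeasureTheory Filter Topology Finset
open scoped ENNReal NNReal Classical

/-- Partial products `t_n = (l_1 ⋯ l_n)/(r_1 ⋯ r_n)`, with `t_0 = 1`. -/
noncomputable def tp (l r : ℕ → ℝ) (n : ℕ) : ℝ :=
  (∏ i ∈ Finset.Icc 1 n, l i) / (∏ i ∈ Finset.Icc 1 n, r i)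

/-- `x_n = Σ_{i=0}^{n-1} t_i`. -/
noncomputable def xp (l r : ℕ → ℝ) (n : ℕ) : ℝ :=
  ∑ i ∈ Finset.range n, tp l r i

/-- The natural filtration of the process `X` (σ-algebra generated by `X_0, …, X_m`). -/
def natFilt {Ω : Type*} (X : ℕ → Ω → ℕ) (m : ℕ) : MeasurableSpace Ω :=
  ⨆ i ∈ Finset.range (m + 1), MeasurableSpace.comap (X i) ⊤

/-- A birth–death chain on ℕ started at `k`, with up–probabilities `r n` and
down–probabilities `l n` for states `n ≥ 1`, and `0` absorbing.  The Markov
property is encoded by conditioning on arbitrary events of the natural filtration. -/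
structure IsBDChain {Ω : Type*} [MeasurableSpace Ω] (P : Measure Ω)
    (X : ℕ → Ω → ℕ) (k : ℕ) (l r : ℕ → ℝ) : Prop where
  isProb : IsProbabilityMeasure P
  one_le_k : 1 ≤ k
  l_pos : ∀ n, 1 ≤ n → 0 < l n
  r_pos : ∀ n, 1 ≤ n → 0 < r n
  lr_one : ∀ n, 1 ≤ n → l n + r n = 1
  meas : ∀ m, Measurable (X m)
  init : ∀ᵐ ω ∂P, X 0 ω = k
  absorb : ∀ᵐ ω ∂P, ∀ m, X m ω = 0 → X (m + 1) ω = 0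
  step_up : ∀ m n, 1 ≤ n → ∀ A : Set Ω, MeasurableSet[natFilt X m] A →
    P (A ∩ {ω | X m ω = n ∧ X (m + 1) ω = n + 1}) =
      ENNReal.ofReal (r n) * P (A ∩ {ω | X m ω = n})
  step_down : ∀ m n, 1 ≤ n → ∀ A : Set Ω, MeasurableSet[natFilt X m] A →
    P (A ∩ {ω | X m ω = n ∧ X (m + 1) ω = n - 1}) =
      ENNReal.ofReal (l n) * P (A ∩ {ω | X m ω = n})

/-- A (finite-valued) stopping time for the natural filtration of `X`. -/
def IsBDStop {Ω : Type*} (X : ℕ → Ω → ℕ) (T : Ω → ℕ) : Prop :=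
  ∀ m, MeasurableSet[natFilt X m] {ω | T ω = m}

/-- An extended-ℕ-valued stopping time for the natural filtration of `X`. -/
def IsBDStopE {Ω : Type*} (X : ℕ → Ω → ℕ) (T : Ω → ℕ∞) : Prop :=
  ∀ m : ℕ, MeasurableSet[natFilt X m] {ω | T ω = (m : ℕ∞)}

/-- First hitting time of the set `S ⊆ ℕ` by the path `m ↦ X m ω`, valued in `ℕ∞`. -/
noncomputable def hitTime {Ω : Type*} (X : ℕ → Ω → ℕ) (S : Set ℕ) (ω : Ω) : ℕ∞ :=
  sInf ((fun m : ℕ => (m : ℕ∞)) '' {m | X m ω ∈ S})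

/-- `T_∂`: the first hitting time of `0`, with value `∞` if `0` is never hit. -/
noncomputable def hit0 {Ω : Type*} (X : ℕ → Ω → ℕ) (ω : Ω) : ℕ∞ :=
  hitTime X {0} ω

/-- `G_T^n`: the number of times `m` with `0 ≤ m ≤ T-1` and `X_m = n` (finite `T`). -/
def count {Ω : Type*} (X : ℕ → Ω → ℕ) (n : ℕ) (T : Ω → ℕ) (ω : Ω) : ℕ :=
  ((Finset.range (T ω)).filter fun m => X m ω = n).card

/-- `G_τ^n` for an `ℕ∞`-valued time `τ`, valued in `ℝ≥0∞`. -/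
noncomputable def countE {Ω : Type*} (X : ℕ → Ω → ℕ) (n : ℕ) (τ : Ω → ℕ∞) (ω : Ω) : ℝ≥0∞ :=
  ∑' m : ℕ, if (m : ℕ∞) < τ ω ∧ X m ω = n then 1 else 0


section NatFilt
set_option linter.unusedSectionVars false
variable {Ω : Type*} [MeasurableSpace Ω] (X : ℕ → Ω → ℕ)

lemma comap_le_natFilt {i m : ℕ} (h : i ≤ m) :
    MeasurableSpace.comap (X i) ⊤ ≤ natFilt X m := by
  exact le_biSup (fun i => MeasurableSpace.comap (X i) ⊤)
    (Finset.mem_range.2 (Nat.lt_succ_of_le h))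

lemma natFilt_mono {m m' : ℕ} (h : m ≤ m') : natFilt X m ≤ natFilt X m' := by
  refine iSup_le fun i => iSup_le fun hi => ?_
  exact comap_le_natFilt X (by simp only [Finset.mem_range] at hi; omega)

lemma natFilt_le (hX : ∀ i, Measurable (X i)) (m : ℕ) :
    natFilt X m ≤ (inferInstance : MeasurableSpace Ω) := by
  refine iSup_le fun i => iSup_le fun _ => ?_
  intro s hs
  obtain ⟨t, -, rfl⟩ := hs
  exact hX i (show MeasurableSet[⊤] t from trivial)

lemma measurableSet_eq_natFilt {i m : ℕ} (h : i ≤ m) (n : ℕ) :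
    MeasurableSet[natFilt X m] {ω | X i ω = n} :=
  comap_le_natFilt X h _ ⟨{n}, trivial, rfl⟩

/-- Any event depending only on the path up to time `m` is in the natural filtration. -/
lemma mem_natFilt_of_local {m : ℕ} (p : (ℕ → ℕ) → Prop)
    (hp : ∀ f g : ℕ → ℕ, (∀ i, i ≤ m → f i = g i) → p f → p g) :
    MeasurableSet[natFilt X m] {ω | p fun i => X i ω} := by
  classical
  have key : {ω | p fun i => X i ω} =
      ⋃ (v : Fin (m+1) → ℕ) (_ : p fun i => if h : i ≤ m then v ⟨i, by omega⟩ else 0),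
        ⋂ i : Fin (m+1), {ω | X i.1 ω = v i} := by
    ext ω
    simp only [Set.mem_iUnion, Set.mem_iInter, Set.mem_setOf_eq]
    constructor
    · intro hω
      refine ⟨fun i => X i.1 ω, ?_, fun i => rfl⟩
      refine hp _ _ (fun i hi => ?_) hω
      simp [hi]
    · rintro ⟨v, hv, hx⟩
      refine hp _ _ (fun i hi => ?_) hv
      simp only [hi, dif_pos]
      exact (hx ⟨i, by omega⟩).symm
  rw [key]
  refine MeasurableSet.iUnion fun v => MeasurableSet.iUnion fun _ => ?_
  exact MeasurableSet.iInter fun i =>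
    measurableSet_eq_natFilt X (Nat.lt_succ_iff.1 i.2) (v i)

end NatFilt

section ENatInf

noncomputable def natInfE (M : Set ℕ) : ℕ∞ := sInf ((fun t : ℕ => (t : ℕ∞)) '' M)

lemma natInfE_eq_top_iff {M : Set ℕ} : natInfE M = ⊤ ↔ M = ∅ := by
  constructor
  · intro h
    by_contra hM
    obtain ⟨t, ht⟩ := Set.nonempty_iff_ne_empty.2 hM
    have : natInfE M ≤ (t : ℕ∞) := sInf_le ⟨t, ht, rfl⟩
    rw [h] at this
    exact (ENat.coe_lt_top t).not_ge this
  · intro h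
    simp [natInfE, h]

lemma natInfE_eq_coe_iff {M : Set ℕ} {m : ℕ} :
    natInfE M = (m : ℕ∞) ↔ m ∈ M ∧ ∀ i, i < m → i ∉ M := by
  constructor
  · intro h
    have hM : M.Nonempty := by
      rw [Set.nonempty_iff_ne_empty]
      intro he
      rw [natInfE_eq_top_iff.2 he] at h
      exact (ENat.coe_lt_top m).ne' h
    have h1 : natInfE M = ((sInf M : ℕ) : ℕ∞) := by
      apply le_antisymm
      · exact sInf_le ⟨sInf M, Nat.sInf_mem hM, rfl⟩
      · refine le_sInf ?_
        rintro x ⟨t, ht, rfl⟩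
        simp only []
        exact_mod_cast Nat.sInf_le ht
    rw [h] at h1
    have hm : m = sInf M := by exact_mod_cast h1
    subst hm
    exact ⟨Nat.sInf_mem hM, fun i hi => Nat.notMem_of_lt_sInf hi⟩
  · rintro ⟨hm, hmin⟩
    apply le_antisymm
    · exact sInf_le ⟨m, hm, rfl⟩
    · refine le_sInf ?_
      rintro x ⟨t, ht, rfl⟩
      have : m ≤ t := by by_contra hc; exact hmin t (by omega) ht
      simp only []
      exact_mod_cast this

lemma natInfE_le {M : Set ℕ} {t : ℕ} (h : t ∈ M) : natInfE M ≤ (t : ℕ∞) :=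
  sInf_le ⟨t, h, rfl⟩

lemma natInfE_ne_top {M : Set ℕ} (h : natInfE M ≠ ⊤) : ∃ m : ℕ, natInfE M = (m : ℕ∞) := by
  cases hM : natInfE M with
  | top => exact absurd hM h
  | coe m => exact ⟨m, rfl⟩

lemma hitTime_eq_natInfE {Ω : Type*} (X : ℕ → Ω → ℕ) (S : Set ℕ) (ω : Ω) :
    hitTime X S ω = natInfE {m | X m ω ∈ S} := rfl

end ENatInf

section TpXp
variable {l r : ℕ → ℝ}

lemma tp_pos (hl : ∀ n, 1 ≤ n → 0 < l n) (hr : ∀ n, 1 ≤ n → 0 < r n) (n : ℕ) :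
    0 < tp l r n := by
  apply div_pos
  · exact Finset.prod_pos fun i hi => hl i (Finset.mem_Icc.1 hi).1
  · exact Finset.prod_pos fun i hi => hr i (Finset.mem_Icc.1 hi).1

lemma tp_succ_mul (hl : ∀ n, 1 ≤ n → 0 < l n) (hr : ∀ n, 1 ≤ n → 0 < r n) (n : ℕ) :
    tp l r (n + 1) * r (n + 1) = tp l r n * l (n + 1) := by
  have hPl := Finset.prod_Icc_succ_top (a := 1) (b := n) (f := l) (by omega)
  have hPr := Finset.prod_Icc_succ_top (a := 1) (b := n) (f := r) (by omega)
  have hPrpos : 0 < ∏ i ∈ Finset.Icc 1 n, r i :=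
    Finset.prod_pos fun i hi => hr i (Finset.mem_Icc.1 hi).1
  have hrpos := hr (n+1) (by omega)
  simp only [tp, hPl, hPr]
  field_simp

lemma xp_succ (n : ℕ) : xp l r (n + 1) = xp l r n + tp l r n := by
  simp [xp, Finset.sum_range_succ]

lemma xp_nonneg (hl : ∀ n, 1 ≤ n → 0 < l n) (hr : ∀ n, 1 ≤ n → 0 < r n) (n : ℕ) :
    0 ≤ xp l r n :=
  Finset.sum_nonneg fun i _ => (tp_pos hl hr i).le

lemma xp_mart (hl : ∀ n, 1 ≤ n → 0 < l n) (hr : ∀ n, 1 ≤ n → 0 < r n)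
    (hlr : ∀ n, 1 ≤ n → l n + r n = 1) (n : ℕ) :
    xp l r (n + 2) * r (n + 1) + xp l r n * l (n + 1) = xp l r (n + 1) := by
  have h1 := xp_succ (l := l) (r := r) (n + 1)
  have h2 := xp_succ (l := l) (r := r) n
  have h3 := tp_succ_mul hl hr n
  have h4 := hlr (n + 1) (by omega)
  have h1' : xp l r (n+2) = xp l r (n+1) + tp l r (n+1) := h1
  linear_combination r (n+1) * h1' - l (n+1) * h2 + h3 + xp l r (n+1) * h4

lemma xp_linear (hl : ∀ n, 1 ≤ n → 0 < l n) (hr : ∀ n, 1 ≤ n → 0 < r n)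
    (htlim : Filter.Tendsto (tp l r) Filter.atTop Filter.atTop) {ε : ℝ} (hε : 0 < ε) :
    ∃ N : ℕ, ∀ n, N ≤ n → (n : ℝ) ≤ ε * xp l r n := by
  obtain ⟨M, hM⟩ := Filter.eventually_atTop.1 ((Filter.tendsto_atTop.1 htlim) (2 / ε))
  refine ⟨2 * M + 2, fun n hn => ?_⟩
  have hsub : Finset.Ico M n ⊆ Finset.range n := by
    intro i hi; simp only [Finset.mem_Ico] at hi; exact Finset.mem_range.2 hi.2
  have h1 : (Finset.Ico M n).card • (2/ε) ≤ ∑ i ∈ Finset.Ico M n, tp l r i :=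
    Finset.card_nsmul_le_sum _ _ _ fun i hi => hM i (Finset.mem_Ico.1 hi).1
  have h2 : ∑ i ∈ Finset.Ico M n, tp l r i ≤ xp l r n :=
    Finset.sum_le_sum_of_subset_of_nonneg hsub fun i _ _ => (tp_pos hl hr i).le
  have hcard : (Finset.Ico M n).card = n - M := Nat.card_Ico M n
  have hge : ((n - M : ℕ) : ℝ) ≥ (n : ℝ) / 2 := by
    have : M ≤ n := by omega
    have h5 : ((n - M : ℕ) : ℝ) = (n : ℝ) - (M : ℝ) := by
      push_cast [this]; ring
    have : 2 * M ≤ n := by omega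
    have h6 : (2 * (M:ℝ)) ≤ (n:ℝ) := by exact_mod_cast this
    linarith
  rw [hcard] at h1
  rw [nsmul_eq_mul] at h1
  have : (n:ℝ)/2 * (2/ε) ≤ xp l r n := by
    refine le_trans ?_ (le_trans h1 h2)
    apply mul_le_mul_of_nonneg_right hge (by positivity)
  calc (n:ℝ) = ε * ((n:ℝ)/2 * (2/ε)) := by field_simp
  _ ≤ ε * xp l r n := by apply mul_le_mul_of_nonneg_left this hε.le

lemma xp_tendsto (hl : ∀ n, 1 ≤ n → 0 < l n) (hr : ∀ n, 1 ≤ n → 0 < r n)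
    (htlim : Filter.Tendsto (tp l r) Filter.atTop Filter.atTop) :
    Filter.Tendsto (xp l r) Filter.atTop Filter.atTop := by
  obtain ⟨N, hN⟩ := xp_linear hl hr htlim (ε := 1) one_pos
  refine Filter.tendsto_atTop_mono' Filter.atTop ?_ tendsto_natCast_atTop_atTop
  filter_upwards [Filter.eventually_ge_atTop N] with n hn
  simpa using hN n hn

end TpXp

noncomputable def xE (l r : ℕ → ℝ) (n : ℕ) : ℝ≥0∞ := ENNReal.ofReal (xp l r n)

lemma xE_zero (l r : ℕ → ℝ) : xE l r 0 = 0 := by simp [xE, xp]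

section Chain
variable {Ω : Type*} [MeasurableSpace Ω] {P : Measure Ω} {X : ℕ → Ω → ℕ} {k : ℕ}
  {l r : ℕ → ℝ} (hC : IsBDChain P X k l r)
include hC

lemma meas_eq (i n : ℕ) : MeasurableSet {ω | X i ω = n} :=
  hC.meas i (MeasurableSet.singleton n : MeasurableSet {n})

lemma meas_comp {g : Ω → ℕ} (hg : Measurable g) : Measurable fun ω => X (g ω) ω := by
  refine measurable_to_countable' fun n => ?_
  have : (fun ω => X (g ω) ω) ⁻¹' {n} = ⋃ i : ℕ, ({ω | g ω = i} ∩ {ω | X i ω = n}) := by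
    ext ω
    simp only [Set.mem_preimage, Set.mem_singleton_iff, Set.mem_iUnion, Set.mem_inter_iff,
      Set.mem_setOf_eq]
    constructor
    · intro h; exact ⟨g ω, rfl, h⟩
    · rintro ⟨i, hi, h⟩; rw [hi]; exact h
  rw [this]
  exact MeasurableSet.iUnion fun i =>
    (hg (MeasurableSet.singleton i)).inter (meas_eq hC i n)

lemma stop_meas {T : Ω → ℕ} (hT : IsBDStop X T) : Measurable T :=
  measurable_to_countable' fun m => natFilt_le X hC.meas m _ (hT m)

lemma stop_gt_mem {T : Ω → ℕ} (hT : IsBDStop X T) (j : ℕ) :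
    MeasurableSet[natFilt X j] {ω | j + 1 ≤ T ω} := by
  have : {ω | j + 1 ≤ T ω} = (⋃ i ∈ Finset.range (j+1), {ω | T ω = i})ᶜ := by
    ext ω
    simp only [Set.mem_setOf_eq, Set.mem_compl_iff, Set.mem_iUnion, Finset.mem_range]
    constructor
    · rintro h ⟨i, hi, rfl⟩; omega
    · intro h; by_contra hc
      exact h ⟨T ω, by omega, rfl⟩
  rw [this]
  refine MeasurableSet.compl ?_
  refine MeasurableSet.biUnion (Finset.range (j+1)).countable_toSet fun i hi => ?_
  refine natFilt_mono X ?_ _ (hT i)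
  have h' : i ∈ Finset.range (j+1) := hi
  have : i < j + 1 := Finset.mem_range.1 h'
  omega

/-- Decomposition of a set integral of `g ∘ Y` over the values of `Y`. -/
lemma lintegral_comp_nat {Y : Ω → ℕ} (hY : Measurable Y) (g : ℕ → ℝ≥0∞) {A : Set Ω}
    (hA : MeasurableSet A) :
    ∫⁻ ω in A, g (Y ω) ∂P = ∑' v : ℕ, g v * P (A ∩ {ω | Y ω = v}) := by
  have h1 : ∫⁻ ω in A, g (Y ω) ∂P = ∫⁻ v, g v ∂((P.restrict A).map Y) :=
    (lintegral_map measurable_from_top hY).symm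
  rw [h1, lintegral_countable']
  refine tsum_congr fun v => ?_
  rw [Measure.map_apply hY (MeasurableSet.singleton v), Measure.restrict_apply (hY (MeasurableSet.singleton v))]
  rw [Set.inter_comm]
  rfl

/-- A.e., from a positive state the chain moves up or down by one. -/
lemma step_pm : ∀ᵐ ω ∂P, ∀ j n, 1 ≤ n → X j ω = n →
    X (j+1) ω = n + 1 ∨ X (j+1) ω = n - 1 := by
  rw [ae_all_iff]
  intro j
  rw [ae_all_iff]
  intro n
  rcases Nat.lt_or_ge n 1 with hn | hn
  · filter_upwards with ω h; omega
  · have hup := hC.step_up j n hn Set.univ MeasurableSet.univ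
    have hdn := hC.step_down j n hn Set.univ MeasurableSet.univ
    simp only [Set.univ_inter] at hup hdn
    set E := {ω | X j ω = n}
    set U := {ω | X j ω = n ∧ X (j+1) ω = n + 1}
    set D := {ω | X j ω = n ∧ X (j+1) ω = n - 1}
    have hEm : MeasurableSet E := meas_eq hC j n
    have hUm : MeasurableSet U := (meas_eq hC j n).inter (meas_eq hC (j+1) (n+1))
    have hDm : MeasurableSet D := (meas_eq hC j n).inter (meas_eq hC (j+1) (n-1))
    have hsub : U ∪ D ⊆ E := by
      rintro ω (⟨h1, -⟩ | ⟨h1, -⟩) <;> exact h1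
    have hdisj : Disjoint U D := by
      rw [Set.disjoint_iff]
      rintro ω ⟨⟨-, h1⟩, ⟨-, h2⟩⟩
      omega
    have hPU : P (U ∪ D) = P E := by
      rw [measure_union hdisj hDm, hup, hdn, ← add_mul,
        ← ENNReal.ofReal_add (hC.r_pos n hn).le (hC.l_pos n hn).le]
      have := hC.lr_one n hn
      rw [show r n + l n = 1 by linarith, ENNReal.ofReal_one, one_mul]
    have hnull : P (E \ (U ∪ D)) = 0 := by
      have hfin : P (U ∪ D) ≠ ⊤ := by
        haveI := hC.isProb
        exact (measure_lt_top P _).ne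
      rw [measure_diff hsub (hUm.union hDm).nullMeasurableSet hfin, hPU, tsub_self]
    rw [ae_iff]
    refine measure_mono_null (fun ω hω => ?_) hnull
    simp only [Set.mem_setOf_eq] at hω
    push_neg at hω
    obtain ⟨-, hXn, hne⟩ := hω
    refine ⟨hXn, fun hUD => ?_⟩
    rcases hUD with ⟨-, h3⟩ | ⟨-, h3⟩
    · exact hne.1 h3
    · exact hne.2 h3

lemma xE_mart (n : ℕ) :
    xE l r (n+2) * ENNReal.ofReal (r (n+1)) + xE l r n * ENNReal.ofReal (l (n+1)) =
      xE l r (n+1) := by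
  have hl := hC.l_pos; have hr := hC.r_pos
  rw [xE, xE, xE, ← ENNReal.ofReal_mul (xp_nonneg hl hr _),
    ← ENNReal.ofReal_mul (xp_nonneg hl hr _),
    ← ENNReal.ofReal_add (mul_nonneg (xp_nonneg hl hr _) (hr (n+1) (by omega)).le)
      (mul_nonneg (xp_nonneg hl hr _) (hl (n+1) (by omega)).le),
    xp_mart hl hr hC.lr_one n]

/-- One-step martingale property. -/
lemma mart_step (j : ℕ) {A : Set Ω} (hA : MeasurableSet[natFilt X j] A) :
    ∫⁻ ω in A, xE l r (X (j+1) ω) ∂P = ∫⁻ ω in A, xE l r (X j ω) ∂P := by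
  haveI := hC.isProb
  have hAm : MeasurableSet A := natFilt_le X hC.meas j _ hA
  have hdecomp : A = ⋃ n : ℕ, A ∩ {ω | X j ω = n} := by
    ext ω; simp
  have hmeas : ∀ n : ℕ, MeasurableSet (A ∩ {ω | X j ω = n}) :=
    fun n => hAm.inter (meas_eq hC j n)
  have hdisj : Pairwise (Function.onFun Disjoint fun n => A ∩ {ω | X j ω = n}) := by
    intro a b hab
    simp only [Function.onFun, Set.disjoint_iff]
    rintro ω ⟨⟨-, h1⟩, ⟨-, h2⟩⟩
    simp only [Set.mem_setOf_eq] at h1 h2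
    exact hab (h1 ▸ h2 ▸ rfl)
  have key : ∀ n : ℕ, ∫⁻ ω in A ∩ {ω | X j ω = n}, xE l r (X (j+1) ω) ∂P =
      ∫⁻ ω in A ∩ {ω | X j ω = n}, xE l r (X j ω) ∂P := by
    intro n
    set An := A ∩ {ω | X j ω = n} with hAn
    have hAnm : MeasurableSet An := hmeas n
    have hRHS : ∫⁻ ω in An, xE l r (X j ω) ∂P = xE l r n * P An := by
      rw [setLIntegral_congr_fun hAnm
        ((fun ω hω => by
          show xE l r (X j ω) = xE l r n
          rw [hω.2])), setLIntegral_const]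
    rcases Nat.eq_zero_or_pos n with hn | hn
    · subst hn
      have h0 : ∫⁻ ω in An, xE l r (X (j+1) ω) ∂P = 0 := by
        have hae : ∀ᵐ ω ∂(P.restrict An), xE l r (X (j+1) ω) = 0 := by
          filter_upwards [ae_restrict_of_ae hC.absorb, ae_restrict_mem hAnm] with ω h1 h2
          rw [h1 j h2.2, xE_zero]
        rw [lintegral_congr_ae hae, lintegral_zero]
      rw [h0, hRHS, xE_zero, zero_mul]
    · obtain ⟨n', rfl⟩ : ∃ n', n = n' + 1 := ⟨n - 1, by omega⟩
      set U := An ∩ {ω | X (j+1) ω = n' + 2} with hU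
      set D := An ∩ {ω | X (j+1) ω = n'} with hD
      have hUm : MeasurableSet U := hAnm.inter (meas_eq hC (j+1) (n'+2))
      have hDm : MeasurableSet D := hAnm.inter (meas_eq hC (j+1) n')
      have hPU : P U = ENNReal.ofReal (r (n'+1)) * P An := by
        have := hC.step_up j (n'+1) (by omega) A hA
        have he : A ∩ {ω | X j ω = n'+1 ∧ X (j+1) ω = n'+1+1} = U := by
          ext ω
          simp only [hU, hAn, Set.mem_inter_iff, Set.mem_setOf_eq]
          tauto
        rw [he] at this
        rw [this, hAn]
      have hPD : P D = ENNReal.ofReal (l (n'+1)) * P An := by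
        have := hC.step_down j (n'+1) (by omega) A hA
        have he : A ∩ {ω | X j ω = n'+1 ∧ X (j+1) ω = n'+1-1} = D := by
          ext ω
          simp only [hD, hAn, Set.mem_inter_iff, Set.mem_setOf_eq]
          constructor
          · rintro ⟨h1, h2, h3⟩; exact ⟨⟨h1, h2⟩, by omega⟩
          · rintro ⟨⟨h1, h2⟩, h3⟩; exact ⟨h1, h2, by omega⟩
        rw [he] at this
        rw [this, hAn]
      set R := An \ (U ∪ D) with hR
      have hRnull : P R = 0 := by
        refine measure_mono_null (fun ω hω => ?_) (ae_iff.1 (step_pm hC))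
        obtain ⟨⟨hωA, hωn⟩, hωUD⟩ := hω
        simp only [Set.mem_setOf_eq]
        push_neg
        refine ⟨j, n'+1, by omega, hωn, ?_, ?_⟩
        · intro hc; exact hωUD (Or.inl ⟨⟨hωA, hωn⟩, hc⟩)
        · intro hc
          exact hωUD (Or.inr ⟨⟨hωA, hωn⟩, by simpa using hc⟩)
      have hAnsplit : An = (U ∪ D) ∪ R := by
        rw [hR, Set.union_diff_cancel]
        rintro ω (⟨h, -⟩ | ⟨h, -⟩) <;> exact h
      have hdisjUD : Disjoint U D := by
        rw [Set.disjoint_iff]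
        rintro ω ⟨⟨-, h1⟩, ⟨-, h2⟩⟩
        simp only [Set.mem_setOf_eq] at h1 h2
        omega
      have hdisjR : Disjoint (U ∪ D) R := Set.disjoint_sdiff_right
      have hconst : ∀ (c : ℕ) (S : Set Ω), MeasurableSet S → (∀ ω ∈ S, X (j+1) ω = c) →
          ∫⁻ ω in S, xE l r (X (j+1) ω) ∂P = xE l r c * P S := by
        intro c S hS hSc
        rw [setLIntegral_congr_fun hS
          ((fun ω hω => by rw [hSc ω hω])), setLIntegral_const]
      calc ∫⁻ ω in An, xE l r (X (j+1) ω) ∂P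
          = ∫⁻ ω in (U ∪ D), xE l r (X (j+1) ω) ∂P + ∫⁻ ω in R, xE l r (X (j+1) ω) ∂P := by
            conv_lhs => rw [hAnsplit]
            exact lintegral_union (hAnm.diff (hUm.union hDm)) hdisjR
        _ = ∫⁻ ω in U, xE l r (X (j+1) ω) ∂P + ∫⁻ ω in D, xE l r (X (j+1) ω) ∂P := by
            rw [setLIntegral_measure_zero _ _ hRnull, add_zero,
              lintegral_union hDm hdisjUD]
        _ = xE l r (n'+2) * P U + xE l r n' * P D := by
            rw [hconst (n'+2) U hUm (fun ω hω => hω.2), hconst n' D hDm (fun ω hω => hω.2)]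
        _ = (xE l r (n'+2) * ENNReal.ofReal (r (n'+1)) +
              xE l r n' * ENNReal.ofReal (l (n'+1))) * P An := by
            rw [hPU, hPD]; ring
        _ = xE l r (n'+1) * P An := by rw [xE_mart hC n']
        _ = ∫⁻ ω in An, xE l r (X j ω) ∂P := hRHS.symm
  calc ∫⁻ ω in A, xE l r (X (j+1) ω) ∂P
      = ∑' n : ℕ, ∫⁻ ω in A ∩ {ω | X j ω = n}, xE l r (X (j+1) ω) ∂P := by
        conv_lhs => rw [hdecomp]
        exact lintegral_iUnion hmeas hdisj _
    _ = ∑' n : ℕ, ∫⁻ ω in A ∩ {ω | X j ω = n}, xE l r (X j ω) ∂P := by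
        exact tsum_congr key
    _ = ∫⁻ ω in A, xE l r (X j ω) ∂P := by
        conv_rhs => rw [hdecomp]
        exact (lintegral_iUnion hmeas hdisj _).symm

end Chain

section Chain2
set_option linter.unusedSectionVars false
variable {Ω : Type*} [MeasurableSpace Ω] {P : Measure Ω} {X : ℕ → Ω → ℕ} {k : ℕ}
  {l r : ℕ → ℝ} (hC : IsBDChain P X k l r)
include hC

/-- Optional stopping: expectation of scale function at bounded stopped time. -/
lemma opt_stop {T : Ω → ℕ} (hT : IsBDStop X T) :
    ∀ j : ℕ, ∫⁻ ω, xE l r (X (min (T ω) j) ω) ∂P = xE l r k := by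
  haveI := hC.isProb
  intro j
  induction j with
  | zero =>
    have : ∀ᵐ ω ∂P, xE l r (X (min (T ω) 0) ω) = xE l r k := by
      filter_upwards [hC.init] with ω h0
      rw [Nat.min_zero, h0]
    rw [lintegral_congr_ae this, lintegral_const, measure_univ, mul_one]
  | succ j ih =>
    set B := {ω | j + 1 ≤ T ω} with hB
    have hBf : MeasurableSet[natFilt X j] B := stop_gt_mem hC hT j
    have hBm : MeasurableSet B := natFilt_le X hC.meas j _ hBf
    have hTm : Measurable T := stop_meas hC hT
    have hmeas_at : ∀ c : ℕ, Measurable fun ω => X (min (T ω) c) ω :=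
      fun c => meas_comp hC (hTm.min measurable_const)
    have split : ∀ c : ℕ, ∫⁻ ω, xE l r (X (min (T ω) c) ω) ∂P =
        ∫⁻ ω in B, xE l r (X (min (T ω) c) ω) ∂P +
        ∫⁻ ω in Bᶜ, xE l r (X (min (T ω) c) ω) ∂P := by
      intro c
      rw [← lintegral_add_compl _ hBm]
    have h1 : ∫⁻ ω in B, xE l r (X (min (T ω) (j+1)) ω) ∂P =
        ∫⁻ ω in B, xE l r (X (j+1) ω) ∂P := by
      refine setLIntegral_congr_fun hBm (fun ω hω => ?_)
      have : min (T ω) (j+1) = j + 1 := by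
        simp only [hB, Set.mem_setOf_eq] at hω; omega
      rw [this]
    have h2 : ∫⁻ ω in B, xE l r (X j ω) ∂P =
        ∫⁻ ω in B, xE l r (X (min (T ω) j) ω) ∂P := by
      refine setLIntegral_congr_fun hBm (fun ω hω => ?_)
      have : min (T ω) j = j := by
        simp only [hB, Set.mem_setOf_eq] at hω; omega
      rw [this]
    have h3 : ∫⁻ ω in Bᶜ, xE l r (X (min (T ω) (j+1)) ω) ∂P =
        ∫⁻ ω in Bᶜ, xE l r (X (min (T ω) j) ω) ∂P := by
      refine setLIntegral_congr_fun hBm.compl (fun ω hω => ?_)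
      have : T ω ≤ j := by
        simp only [hB, Set.mem_compl_iff, Set.mem_setOf_eq] at hω; omega
      rw [min_eq_left (by omega), min_eq_left this]
    calc ∫⁻ ω, xE l r (X (min (T ω) (j+1)) ω) ∂P
        = ∫⁻ ω in B, xE l r (X (min (T ω) (j+1)) ω) ∂P +
          ∫⁻ ω in Bᶜ, xE l r (X (min (T ω) (j+1)) ω) ∂P := split (j+1)
      _ = ∫⁻ ω in B, xE l r (X (j+1) ω) ∂P +
          ∫⁻ ω in Bᶜ, xE l r (X (min (T ω) j) ω) ∂P := by rw [h1, h3]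
      _ = ∫⁻ ω in B, xE l r (X j ω) ∂P +
          ∫⁻ ω in Bᶜ, xE l r (X (min (T ω) j) ω) ∂P := by rw [mart_step hC j hBf]
      _ = ∫⁻ ω in B, xE l r (X (min (T ω) j) ω) ∂P +
          ∫⁻ ω in Bᶜ, xE l r (X (min (T ω) j) ω) ∂P := by rw [h2]
      _ = ∫⁻ ω, xE l r (X (min (T ω) j) ω) ∂P := (split j).symm
      _ = xE l r k := ih

/-- Expectation of scale function at a finite stopping time is at most `x_k`. -/
lemma opt_stop_le {T : Ω → ℕ} (hT : IsBDStop X T) :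
    ∫⁻ ω, xE l r (X (T ω) ω) ∂P ≤ xE l r k := by
  have hTm : Measurable T := stop_meas hC hT
  have hmeas_at : ∀ c : ℕ, Measurable fun ω => X (min (T ω) c) ω :=
    fun c => meas_comp hC (hTm.min measurable_const)
  have key : ∀ ω, xE l r (X (T ω) ω) =
      Filter.liminf (fun j => xE l r (X (min (T ω) j) ω)) Filter.atTop := by
    intro ω
    refine (Filter.Tendsto.liminf_eq ?_).symm
    refine tendsto_atTop_of_eventually_const (i₀ := T ω) fun j hj => ?_
    rw [min_eq_left hj]
  calc ∫⁻ ω, xE l r (X (T ω) ω) ∂P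
      = ∫⁻ ω, Filter.liminf (fun j => xE l r (X (min (T ω) j) ω)) Filter.atTop ∂P :=
        lintegral_congr fun ω => key ω
    _ ≤ Filter.liminf (fun j => ∫⁻ ω, xE l r (X (min (T ω) j) ω) ∂P) Filter.atTop :=
        by
        have hxE : Measurable (xE l r) := measurable_from_top
        exact lintegral_liminf_le fun j => hxE.comp (hmeas_at j)
    _ = xE l r k := by
        have : (fun j => ∫⁻ ω, xE l r (X (min (T ω) j) ω) ∂P) = fun _ => xE l r k := by
          funext j; exact opt_stop hC hT j
        rw [this, Filter.liminf_const]

/-- Expectation of scale function at a deterministic time equals `x_k`. -/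
lemma det_eq {j : ℕ} : ∫⁻ ω, xE l r (X j ω) ∂P = xE l r k := by
  have hT : IsBDStop X (fun _ => j) := by
    intro m
    rcases eq_or_ne j m with rfl | hne
    · have : {ω : Ω | (fun _ => j) ω = j} = Set.univ := by ext ω; simp
      rw [this]
      exact @MeasurableSet.univ Ω (natFilt X j)
    · have : {ω : Ω | (fun _ => j) ω = m} = ∅ := by
        ext ω; simp [hne]
      rw [this]
      exact @MeasurableSet.empty Ω (natFilt X m)
  have := opt_stop hC hT j
  simpa using this

end Chain2

section Chain3
set_option linter.unusedSectionVars false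
variable {Ω : Type*} [MeasurableSpace Ω] {P : Measure Ω} {X : ℕ → Ω → ℕ} {k : ℕ}
  {l r : ℕ → ℝ} (hC : IsBDChain P X k l r)
include hC

/-- From state `s` at time `m`, the probability of walking straight down to `0`
is `l s ⋯ l 1` times the probability of the conditioning event. -/
lemma straight_down (m s : ℕ) {A : Set Ω} (hA : MeasurableSet[natFilt X m] A)
    (hAs : A ⊆ {ω | X m ω = s}) :
    P (A ∩ ⋂ i ∈ Finset.Icc 1 s, {ω | X (m + i) ω = s - i}) =
      ENNReal.ofReal (∏ i ∈ Finset.Icc 1 s, l i) * P A := by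
  have aux : ∀ i, i ≤ s →
      P (A ∩ ⋂ i' ∈ Finset.Icc 1 i, {ω | X (m + i') ω = s - i'}) =
        ENNReal.ofReal (∏ i' ∈ Finset.Icc (s - i + 1) s, l i') * P A := by
    intro i
    induction i with
    | zero =>
      intro _
      rw [Finset.Icc_eq_empty (by omega : ¬ (1:ℕ) ≤ 0),
        Finset.Icc_eq_empty (by omega : ¬ s - 0 + 1 ≤ s)]
      simp
    | succ i ih =>
      intro hi
      have his : i ≤ s := by omega
      have hIH := ih his
      set B := A ∩ ⋂ i' ∈ Finset.Icc 1 i, {ω | X (m + i') ω = s - i'} with hBdef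
      have hBmem : MeasurableSet[natFilt X (m + i)] B := by
        refine MeasurableSet.inter (natFilt_mono X (by omega) _ hA) ?_
        refine MeasurableSet.biInter (Finset.Icc 1 i).countable_toSet fun i' hi' => ?_
        have h1 : i' ≤ i := (Finset.mem_Icc.1 (Finset.mem_coe.1 hi')).2
        exact measurableSet_eq_natFilt X (by omega) _
      have hBsub : B ⊆ {ω | X (m + i) ω = s - i} := by
        rcases Nat.eq_zero_or_pos i with rfl | hpos
        · intro ω hω
          have := hAs hω.1
          simpa using this
        · intro ω hω
          have := hω.2
          simp only [Set.mem_iInter] at this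
          exact this i (Finset.mem_Icc.2 ⟨hpos, le_rfl⟩)
      have hstep := hC.step_down (m + i) (s - i) (by omega) B hBmem
      have hIcc : Finset.Icc 1 (i+1) = insert (i+1) (Finset.Icc 1 i) := by
        ext x; simp only [Finset.mem_Icc, Finset.mem_insert]; omega
      have hsets : A ∩ ⋂ i' ∈ Finset.Icc 1 (i+1), {ω | X (m + i') ω = s - i'} =
          B ∩ {ω | X (m + i + 1) ω = s - i - 1} := by
        rw [hIcc, Finset.set_biInter_insert]
        have hss : {ω : Ω | X (m + (i+1)) ω = s - (i+1)} =
            {ω : Ω | X (m + i + 1) ω = s - i - 1} := by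
          rw [show s - (i+1) = s - i - 1 from by omega]
          rfl
        rw [hss, hBdef]
        ext ω
        constructor
        · rintro ⟨h1, h2, h3⟩; exact ⟨⟨h1, h3⟩, h2⟩
        · rintro ⟨⟨h1, h3⟩, h2⟩; exact ⟨h1, h2, h3⟩
      have he1 : B ∩ {ω | X (m + i) ω = s - i} = B :=
        Set.inter_eq_self_of_subset_left hBsub
      have he2 : B ∩ {ω | X (m + i) ω = s - i ∧ X (m + i + 1) ω = s - i - 1} =
          B ∩ {ω | X (m + i + 1) ω = s - i - 1} := by
        ext ω
        constructor
        · rintro ⟨h1, -, h3⟩; exact ⟨h1, h3⟩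
        · rintro ⟨h1, h3⟩; exact ⟨h1, hBsub h1, h3⟩
      rw [he2, he1] at hstep
      rw [hsets, hstep, hIH, ← mul_assoc,
        ← ENNReal.ofReal_mul (hC.l_pos (s-i) (by omega)).le]
      congr 2
      have h1 : s - (i+1) + 1 = s - i := by omega
      rw [h1, Finset.Icc_eq_cons_Ioc (by omega : s - i ≤ s), Finset.prod_cons,
        ← Finset.Icc_add_one_left_eq_Ioc]
  have h := aux s le_rfl
  rw [h, show s - s + 1 = 1 from by omega]

end Chain3

section VT

/-- Straight-down path event starting at time `m`. -/
def SDp (f : ℕ → ℕ) (m : ℕ) : Prop := ∀ i, i ≤ f m → f (m + i) = f m - i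

/-- `vt N j f`: the `j`-th visit time of the path `f` to `[0,N]`, where successive
visit times are required to be at least `N+1` apart. -/
noncomputable def vt (N : ℕ) : ℕ → (ℕ → ℕ) → ℕ∞
  | 0, f => natInfE {t | f t ≤ N}
  | (j+1), f => natInfE {t | f t ≤ N ∧ vt N j f + ((N : ℕ∞) + 1) ≤ (t : ℕ∞)}

lemma vt_state {N j : ℕ} {f : ℕ → ℕ} {m : ℕ} (h : vt N j f = (m : ℕ∞)) : f m ≤ N := by
  cases j with
  | zero => exact (natInfE_eq_coe_iff.1 h).1
  | succ j => exact (natInfE_eq_coe_iff.1 h).1.1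

lemma vt_next {N j : ℕ} {f : ℕ → ℕ} {t : ℕ} (h : vt N (j+1) f = (t : ℕ∞)) :
    ∃ m : ℕ, vt N j f = (m : ℕ∞) ∧ m + N + 1 ≤ t := by
  have h1 := (natInfE_eq_coe_iff.1 h).1
  obtain ⟨-, h2⟩ := h1
  have hne : vt N j f ≠ ⊤ := by
    intro hc
    rw [hc] at h2
    simp at h2
  cases hv : vt N j f with
  | top => exact absurd hv hne
  | coe m =>
    rw [hv] at h2
    refine ⟨m, rfl, ?_⟩
    have h3 : ((m + N + 1 : ℕ) : ℕ∞) ≤ (t : ℕ∞) := by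
      push_cast
      rw [← add_assoc] at h2
      exact h2
    exact_mod_cast h3

lemma vt_prev {N : ℕ} {f : ℕ → ℕ} :
    ∀ j j' (m : ℕ), j' < j → vt N j f = (m : ℕ∞) →
      ∃ m' : ℕ, vt N j' f = (m' : ℕ∞) ∧ m' + N + 1 ≤ m := by
  intro j
  induction j with
  | zero => intro j' m h; omega
  | succ j ih =>
    intro j' m h hv
    rcases Nat.lt_or_ge j' j with h1 | h1
    · obtain ⟨m1, hm1, hle1⟩ := vt_next hv
      obtain ⟨m', hm', hle'⟩ := ih j' m1 h1 hm1
      exact ⟨m', hm', by omega⟩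
    · have : j' = j := by omega
      subst this
      obtain ⟨m', hm', hle'⟩ := vt_next hv
      exact ⟨m', hm', hle'⟩

lemma vt_local {N : ℕ} : ∀ (j : ℕ) (f g : ℕ → ℕ) (m : ℕ),
    (∀ i, i ≤ m → f i = g i) → vt N j f = (m : ℕ∞) → vt N j g = (m : ℕ∞) := by
  intro j
  induction j with
  | zero =>
    intro f g m hagree h
    obtain ⟨h1, h2⟩ := natInfE_eq_coe_iff.1 h
    refine natInfE_eq_coe_iff.2 ⟨?_, ?_⟩
    · simp only [Set.mem_setOf_eq] at h1 ⊢
      rwa [← hagree m le_rfl]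
    · intro i hi hmem
      refine h2 i hi ?_
      simp only [Set.mem_setOf_eq] at hmem ⊢
      rwa [hagree i (by omega)]
  | succ j ih =>
    intro f g m hagree h
    obtain ⟨h1, h2⟩ := natInfE_eq_coe_iff.1 h
    obtain ⟨⟨hfm, -⟩, -⟩ := And.intro h1 h2
    obtain ⟨m0, hm0, hle0⟩ := vt_next h
    have hg0 : vt N j g = (m0 : ℕ∞) := ih f g m0 (fun i hi => hagree i (by omega)) hm0
    refine natInfE_eq_coe_iff.2 ⟨?_, ?_⟩
    · refine ⟨by rwa [← hagree m le_rfl], ?_⟩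
      rw [hg0]
      have : ((m0 + N + 1 : ℕ) : ℕ∞) ≤ (m : ℕ∞) := by exact_mod_cast hle0
      calc (m0 : ℕ∞) + ((N : ℕ∞) + 1) = ((m0 + N + 1 : ℕ) : ℕ∞) := by push_cast; ring
        _ ≤ (m : ℕ∞) := this
    · intro i hi hmem
      obtain ⟨hgi, hvgi⟩ := hmem
      refine h2 i hi ⟨by rwa [hagree i (by omega)], ?_⟩
      rwa [hm0, ← hg0]

lemma vt_finite_of_infinite {N : ℕ} {f : ℕ → ℕ} (hinf : {t | f t ≤ N}.Infinite) :
    ∀ j, ∃ m : ℕ, vt N j f = (m : ℕ∞) := by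
  intro j
  induction j with
  | zero =>
    refine natInfE_ne_top fun hc => ?_
    rw [natInfE_eq_top_iff.1 hc] at hinf
    exact hinf (Set.finite_empty)
  | succ j ih =>
    obtain ⟨m, hm⟩ := ih
    obtain ⟨t, ht, hlt⟩ := hinf.exists_gt (m + N)
    have hmem : t ∈ {t | f t ≤ N ∧ vt N j f + ((N : ℕ∞) + 1) ≤ (t : ℕ∞)} := by
      refine ⟨ht, ?_⟩
      rw [hm]
      calc (m : ℕ∞) + ((N : ℕ∞) + 1) = ((m + N + 1 : ℕ) : ℕ∞) := by push_cast; ring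
        _ ≤ (t : ℕ∞) := by exact_mod_cast hlt
    refine natInfE_ne_top fun hc => ?_
    rw [natInfE_eq_top_iff.1 hc] at hmem
    exact hmem

/-- The event used in the absorption argument. -/
def Hp (N j : ℕ) (f : ℕ → ℕ) : Prop :=
  (∃ m : ℕ, vt N j f = (m : ℕ∞)) ∧
    ∀ j' (m' : ℕ), j' < j → vt N j' f = (m' : ℕ∞) → ¬ SDp f m'

lemma HpVt_local {N j m : ℕ} {f g : ℕ → ℕ} (hagree : ∀ i, i ≤ m → f i = g i)
    (h : Hp N j f ∧ vt N j f = (m : ℕ∞)) : Hp N j g ∧ vt N j g = (m : ℕ∞) := by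
  obtain ⟨⟨-, hnd⟩, hv⟩ := h
  have hvg : vt N j g = (m : ℕ∞) := vt_local j f g m hagree hv
  refine ⟨⟨⟨m, hvg⟩, ?_⟩, hvg⟩
  intro j' m' hj' hvg' hSD
  obtain ⟨m'', hm'', hle''⟩ := vt_prev j j' m hj' hv
  have hgm'' : vt N j' g = (m'' : ℕ∞) := vt_local j' f g m'' (fun i hi => hagree i (by omega)) hm''
  have hmm : m' = m'' := by
    rw [hvg'] at hgm''
    exact_mod_cast hgm''
  subst hmm
  have hfm' : f m' ≤ N := vt_state hm''
  have hgm'eq : g m' = f m' := (hagree m' (by omega)).symm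
  refine hnd j' m' hj' hm'' ?_
  intro i hif
  have hig : i ≤ g m' := by rwa [hgm'eq]
  have := hSD i hig
  rw [hagree (m' + i) (by omega), this, hgm'eq]

end VT

section Absorb
set_option linter.unusedSectionVars false
variable {Ω : Type*} [MeasurableSpace Ω] {P : Measure Ω} {X : ℕ → Ω → ℕ} {k : ℕ}
  {l r : ℕ → ℝ} (hC : IsBDChain P X k l r)
include hC

lemma SD_iff {m s : ℕ} {ω : Ω} (hω : X m ω = s) :
    SDp (fun t => X t ω) m ↔ ω ∈ ⋂ i ∈ Finset.Icc 1 s, {ω' | X (m + i) ω' = s - i} := by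
  simp only [Set.mem_iInter, Set.mem_setOf_eq, Finset.mem_Icc, SDp, hω]
  constructor
  · intro h i hi
    exact h i hi.2
  · intro h i hi
    rcases Nat.eq_zero_or_pos i with rfl | hpos
    · simpa using hω
    · exact h i ⟨hpos, hi⟩

lemma meas_SD (m : ℕ) : MeasurableSet {ω | SDp (fun t => X t ω) m} := by
  have : {ω | SDp (fun t => X t ω) m} =
      ⋃ s : ℕ, ({ω | X m ω = s} ∩ ⋂ i ∈ Finset.Icc 1 s, {ω' | X (m + i) ω' = s - i}) := by
    ext ω
    simp only [Set.mem_iUnion, Set.mem_inter_iff, Set.mem_setOf_eq]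
    constructor
    · intro h
      exact ⟨X m ω, rfl, (SD_iff hC rfl).1 h⟩
    · rintro ⟨s, hs, hmem⟩
      exact (SD_iff hC hs).2 hmem
  rw [this]
  refine MeasurableSet.iUnion fun s => (meas_eq hC m s).inter ?_
  exact MeasurableSet.biInter (Finset.Icc 1 s).countable_toSet fun i _ =>
    meas_eq hC (m + i) (s - i)

lemma Ajm_natFilt (N j m : ℕ) :
    MeasurableSet[natFilt X m] {ω | Hp N j (fun t => X t ω) ∧
      vt N j (fun t => X t ω) = (m : ℕ∞)} :=
  mem_natFilt_of_local X (fun f => Hp N j f ∧ vt N j f = (m : ℕ∞))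
    (fun f g hagree h => HpVt_local hagree h)

/-- Never-absorbed paths visit `[0,N]` infinitely often with probability zero. -/
lemma absorb_of_infinite_visits (N : ℕ) :
    P {ω | (∀ t, X t ω ≠ 0) ∧ {t | X t ω ≤ N}.Infinite} = 0 := by
  haveI := hC.isProb
  classical
  set δr : ℝ := ∏ i ∈ Finset.Icc 1 N, l i with hδr
  have hδpos : 0 < δr :=
    Finset.prod_pos fun i hi => hC.l_pos i (Finset.mem_Icc.1 hi).1
  have hl_le_one : ∀ i, 1 ≤ i → l i ≤ 1 := by
    intro i hi
    have h1 := hC.lr_one i hi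
    have h2 := hC.r_pos i hi
    linarith
  set d : ℝ≥0∞ := ENNReal.ofReal δr with hd
  have hd0 : d ≠ 0 := by
    simp only [hd, ne_eq, ENNReal.ofReal_eq_zero, not_le]
    exact hδpos
  have hd1 : d ≤ 1 := by
    rw [hd, ← ENNReal.ofReal_one]
    refine ENNReal.ofReal_le_ofReal ?_
    refine Finset.prod_le_one (fun i hi => (hC.l_pos i (Finset.mem_Icc.1 hi).1).le)
      (fun i hi => hl_le_one i (Finset.mem_Icc.1 hi).1)
  set HS : ℕ → Set Ω := fun j => {ω | Hp N j (fun t => X t ω)} with hHS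
  set A : ℕ → ℕ → Set Ω := fun j m => {ω | Hp N j (fun t => X t ω) ∧
      vt N j (fun t => X t ω) = (m : ℕ∞)} with hA
  have hAmeas : ∀ j m, MeasurableSet (A j m) :=
    fun j m => natFilt_le X hC.meas m _ (Ajm_natFilt hC N j m)
  have hAdisj : ∀ j, Pairwise (Function.onFun Disjoint fun m => A j m) := by
    intro j m1 m2 hne
    simp only [Function.onFun, Set.disjoint_iff]
    rintro ω ⟨⟨-, h1⟩, ⟨-, h2⟩⟩
    rw [h1] at h2
    exact hne (by exact_mod_cast h2)
  have hHSunion : ∀ j, HS j = ⋃ m : ℕ, A j m := by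
    intro j
    ext ω
    simp only [hHS, hA, Set.mem_setOf_eq, Set.mem_iUnion]
    constructor
    · intro h
      obtain ⟨m, hm⟩ := h.1
      exact ⟨m, h, hm⟩
    · rintro ⟨m, h, -⟩
      exact h
  have hHSmeas : ∀ j, MeasurableSet (HS j) := by
    intro j
    rw [hHSunion j]
    exact MeasurableSet.iUnion fun m => hAmeas j m
  -- Per-(j,m) inequality
  have hkey : ∀ j m, P (A j m ∩ {ω | SDp (fun t => X t ω) m}ᶜ) ≤ (1 - d) * P (A j m) := by
    intro j m
    set S := {ω | SDp (fun t => X t ω) m} with hS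
    have hSm : MeasurableSet S := meas_SD hC m
    have hAsub : A j m ⊆ {ω | X m ω ≤ N} := by
      rintro ω ⟨-, hv⟩
      exact vt_state hv
    have hsplit : A j m ∩ Sᶜ = ⋃ s ∈ Finset.range (N+1),
        ((A j m ∩ {ω | X m ω = s}) ∩ Sᶜ) := by
      ext ω
      simp only [Set.mem_inter_iff, Set.mem_iUnion, Finset.mem_range, Set.mem_setOf_eq,
        Set.mem_compl_iff]
      constructor
      · rintro ⟨hAω, hSω⟩
        exact ⟨X m ω, by have h5 : X m ω ≤ N := hAsub hAω; omega, ⟨hAω, rfl⟩, hSω⟩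
      · rintro ⟨s, -, ⟨hAω, -⟩, hSω⟩
        exact ⟨hAω, hSω⟩
    have hpers : ∀ s, s ≤ N → P ((A j m ∩ {ω | X m ω = s}) ∩ Sᶜ) ≤
        (1 - d) * P (A j m ∩ {ω | X m ω = s}) := by
      intro s hsN
      set Asm := A j m ∩ {ω | X m ω = s} with hAsm
      have hAsmF : MeasurableSet[natFilt X m] Asm :=
        (Ajm_natFilt hC N j m).inter (measurableSet_eq_natFilt X le_rfl s)
      have hAsmM : MeasurableSet Asm := natFilt_le X hC.meas m _ hAsmF
      have hAsmsub : Asm ⊆ {ω | X m ω = s} := fun ω hω => hω.2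
      have hSD := straight_down hC m s hAsmF hAsmsub
      have hSeq : Asm ∩ S = Asm ∩ ⋂ i ∈ Finset.Icc 1 s, {ω' | X (m + i) ω' = s - i} := by
        ext ω
        constructor
        · rintro ⟨h1, h2⟩
          exact ⟨h1, (SD_iff hC h1.2).1 h2⟩
        · rintro ⟨h1, h2⟩
          exact ⟨h1, (SD_iff hC h1.2).2 h2⟩
      have hdle : d * P Asm ≤ P (Asm ∩ S) := by
        rw [hSeq, hSD]
        refine mul_le_mul_left ?_ _
        exact ENNReal.ofReal_le_ofReal (by
          have h1 : (Finset.Icc 1 N) = Finset.Ioc 0 N := by rw [← Finset.Icc_add_one_left_eq_Ioc]; rfl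
          have h2 : (Finset.Icc 1 s) = Finset.Ioc 0 s := by rw [← Finset.Icc_add_one_left_eq_Ioc]; rfl
          rw [hδr, h1, h2, ← Finset.prod_Ioc_consecutive l (Nat.zero_le s) hsN]
          have h3 : ∏ i ∈ Finset.Ioc s N, l i ≤ 1 :=
            Finset.prod_le_one (fun i hi => (hC.l_pos i (by
              have := (Finset.mem_Ioc.1 hi).1; omega)).le)
              (fun i hi => hl_le_one i (by have := (Finset.mem_Ioc.1 hi).1; omega))
          have h4 : 0 ≤ ∏ i ∈ Finset.Ioc 0 s, l i :=
            Finset.prod_nonneg fun i hi => (hC.l_pos i (by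
              have := (Finset.mem_Ioc.1 hi).1; omega)).le
          calc (∏ i ∈ Finset.Ioc 0 s, l i) * ∏ i ∈ Finset.Ioc s N, l i
              ≤ (∏ i ∈ Finset.Ioc 0 s, l i) * 1 := by
                exact mul_le_mul_of_nonneg_left h3 h4
            _ = ∏ i ∈ Finset.Ioc 0 s, l i := mul_one _)
      have hdiff : Asm ∩ Sᶜ = Asm \ (Asm ∩ S) := by
        ext ω
        constructor
        · rintro ⟨h1, h2⟩; exact ⟨h1, fun hc => h2 hc.2⟩
        · rintro ⟨h1, h2⟩; exact ⟨h1, fun hc => h2 ⟨h1, hc⟩⟩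
      rw [hdiff, measure_diff (Set.inter_subset_left) (hAsmM.inter hSm).nullMeasurableSet
        (measure_ne_top P _)]
      calc P Asm - P (Asm ∩ S) ≤ P Asm - d * P Asm := tsub_le_tsub_left hdle _
        _ = 1 * P Asm - d * P Asm := by rw [one_mul]
        _ = (1 - d) * P Asm := (ENNReal.sub_mul (fun _ _ => measure_ne_top P _)).symm
    -- sum over s
    calc P (A j m ∩ Sᶜ)
        = ∑ s ∈ Finset.range (N+1), P ((A j m ∩ {ω | X m ω = s}) ∩ Sᶜ) := by
          rw [hsplit]
          refine measure_biUnion_finset ?_ ?_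
          · intro s1 _ s2 _ hne
            simp only [Set.disjoint_iff]
            rintro ω ⟨⟨⟨-, h1⟩, -⟩, ⟨⟨-, h2⟩, -⟩⟩
            simp only [Set.mem_setOf_eq] at h1 h2
            exact hne (h1 ▸ h2 ▸ rfl)
          · intro s _
            exact ((hAmeas j m).inter (meas_eq hC m s)).inter hSm.compl
      _ ≤ ∑ s ∈ Finset.range (N+1), (1 - d) * P (A j m ∩ {ω | X m ω = s}) := by
          refine Finset.sum_le_sum fun s hs => hpers s (by
            have := Finset.mem_range.1 hs; omega)
      _ = (1 - d) * ∑ s ∈ Finset.range (N+1), P (A j m ∩ {ω | X m ω = s}) := by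
          rw [Finset.mul_sum]
      _ = (1 - d) * P (A j m) := by
          congr 1
          rw [← measure_biUnion_finset ?_ ?_]
          · congr 1
            ext ω
            simp only [Set.mem_iUnion, Finset.mem_range, Set.mem_inter_iff, Set.mem_setOf_eq]
            constructor
            · rintro ⟨s, -, h, -⟩
              exact h
            · intro h
              exact ⟨X m ω, by have h5 : X m ω ≤ N := hAsub h; omega, h, rfl⟩
          · intro s1 _ s2 _ hne
            simp only [Set.disjoint_iff]
            rintro ω ⟨⟨-, h1⟩, ⟨-, h2⟩⟩
            simp only [Set.mem_setOf_eq] at h1 h2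
            exact hne (h1 ▸ h2 ▸ rfl)
          · intro s _
            exact (hAmeas j m).inter (meas_eq hC m s)
  -- recursion
  have hrec : ∀ j, P (HS (j+1)) ≤ (1 - d) * P (HS j) := by
    intro j
    have hsub : HS (j+1) ⊆ ⋃ m : ℕ, (A j m ∩ {ω | SDp (fun t => X t ω) m}ᶜ) := by
      rintro ω ⟨⟨t, ht⟩, hnd⟩
      obtain ⟨m, hm, -⟩ := vt_next ht
      refine Set.mem_iUnion.2 ⟨m, ⟨⟨⟨m, hm⟩, fun j' m' h1 h2 => hnd j' m' (by omega) h2⟩, hm⟩,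
        fun hc => hnd j m (by omega) hm hc⟩
    calc P (HS (j+1)) ≤ P (⋃ m : ℕ, (A j m ∩ {ω | SDp (fun t => X t ω) m}ᶜ)) :=
          measure_mono hsub
      _ ≤ ∑' m : ℕ, P (A j m ∩ {ω | SDp (fun t => X t ω) m}ᶜ) := measure_iUnion_le _
      _ ≤ ∑' m : ℕ, (1 - d) * P (A j m) := ENNReal.tsum_le_tsum fun m => hkey j m
      _ = (1 - d) * ∑' m : ℕ, P (A j m) := ENNReal.tsum_mul_left
      _ = (1 - d) * P (HS j) := by
          congr 1
          rw [hHSunion j]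
          exact (measure_iUnion (hAdisj j) (hAmeas j)).symm
  have hpow : ∀ j, P (HS j) ≤ (1 - d) ^ j := by
    intro j
    induction j with
    | zero => simpa using prob_le_one
    | succ j ih =>
      calc P (HS (j+1)) ≤ (1 - d) * P (HS j) := hrec j
        _ ≤ (1 - d) * (1 - d) ^ j := mul_le_mul_right ih _
        _ = (1 - d) ^ (j+1) := by rw [pow_succ, mul_comm]
  have hsubHS : {ω | (∀ t, X t ω ≠ 0) ∧ {t | X t ω ≤ N}.Infinite} ⊆ ⋂ j, HS j := by
    rintro ω ⟨hnever, hinf⟩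
    refine Set.mem_iInter.2 fun j => ⟨vt_finite_of_infinite hinf j, ?_⟩
    intro j' m' hj' hv hSD
    have h0 := hSD (X m' ω) le_rfl
    rw [Nat.sub_self] at h0
    exact hnever (m' + X m' ω) h0
  have hlim : Filter.Tendsto (fun j => (1 - d) ^ j) Filter.atTop (nhds 0) := by
    refine ENNReal.tendsto_pow_atTop_nhds_zero_of_lt_one ?_
    exact ENNReal.sub_lt_self ENNReal.one_ne_top one_ne_zero hd0
  have hle0 : P {ω | (∀ t, X t ω ≠ 0) ∧ {t | X t ω ≤ N}.Infinite} ≤ 0 := by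
    refine ge_of_tendsto' hlim fun j => ?_
    calc P {ω | (∀ t, X t ω ≠ 0) ∧ {t | X t ω ≤ N}.Infinite}
        ≤ P (HS j) := measure_mono (fun ω hω => Set.mem_iInter.1 (hsubHS hω) j)
      _ ≤ (1 - d) ^ j := hpow j
  exact le_antisymm hle0 zero_le

end Absorb

section Hit
set_option linter.unusedSectionVars false
variable {Ω : Type*} [MeasurableSpace Ω] {P : Measure Ω} {X : ℕ → Ω → ℕ} {k : ℕ}
  {l r : ℕ → ℝ} (hC : IsBDChain P X k l r)

lemma hit0_coe_zero {ω : Ω} {j : ℕ} (h : hit0 X ω = (j : ℕ∞)) : X j ω = 0 := by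
  have h1 : natInfE {m | X m ω ∈ ({0} : Set ℕ)} = (j : ℕ∞) := h
  have := (natInfE_eq_coe_iff.1 h1).1
  simpa using this

include hC

lemma hit0_ae_finite (htlim : Filter.Tendsto (tp l r) Filter.atTop Filter.atTop) :
    ∀ᵐ ω ∂P, hit0 X ω ≠ ⊤ := by
  haveI := hC.isProb
  have hxE : Measurable (xE l r) := measurable_from_top
  have hmeas_m : ∀ m : ℕ, Measurable fun ω => xE l r (X m ω) :=
    fun m => hxE.comp (hC.meas m)
  have hliminf_lt : ∀ᵐ ω ∂P,
      Filter.liminf (fun m => xE l r (X m ω)) Filter.atTop < ⊤ := by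
    have hle : ∫⁻ ω, Filter.liminf (fun m => xE l r (X m ω)) Filter.atTop ∂P ≤ xE l r k := by
      calc ∫⁻ ω, Filter.liminf (fun m => xE l r (X m ω)) Filter.atTop ∂P
          ≤ Filter.liminf (fun m => ∫⁻ ω, xE l r (X m ω) ∂P) Filter.atTop :=
            lintegral_liminf_le hmeas_m
        _ = xE l r k := by
            have : (fun m : ℕ => ∫⁻ ω, xE l r (X m ω) ∂P) = fun _ => xE l r k := by
              funext m; exact det_eq hC
            rw [this, Filter.liminf_const]
    have hmeasL : Measurable fun ω => Filter.liminf (fun m => xE l r (X m ω)) Filter.atTop :=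
      Measurable.liminf hmeas_m
    refine ae_lt_top hmeasL ?_
    exact ne_top_of_le_ne_top ENNReal.ofReal_ne_top hle
  have hIO : ∀ᵐ ω ∂P, ∀ N : ℕ,
      ¬((∀ t, X t ω ≠ 0) ∧ {t | X t ω ≤ N}.Infinite) := by
    rw [ae_all_iff]
    intro N
    rw [ae_iff]
    have : {ω | ¬¬((∀ t, X t ω ≠ 0) ∧ {t | X t ω ≤ N}.Infinite)} =
        {ω | (∀ t, X t ω ≠ 0) ∧ {t | X t ω ≤ N}.Infinite} := by
      ext ω; exact not_not
    rw [this]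
    exact absorb_of_infinite_visits hC N
  filter_upwards [hliminf_lt, hIO] with ω h1 h2
  intro htop
  have hnever : ∀ t, X t ω ≠ 0 := by
    intro t h0
    have hempty := natInfE_eq_top_iff.1 (show natInfE {m | X m ω ∈ ({0} : Set ℕ)} = ⊤ from htop)
    rw [Set.eq_empty_iff_forall_notMem] at hempty
    exact hempty t (by simpa using h0)
  have hbdd : ∃ N : ℕ, {t | X t ω ≤ N}.Infinite := by
    by_contra hc
    push_neg at hc
    have htend : Filter.Tendsto (fun t => X t ω) Filter.atTop Filter.atTop := by
      rw [Filter.tendsto_atTop]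
      intro b
      have hfin : {t | X t ω ≤ b}.Finite := hc b
      have hev : ∀ᶠ t in Filter.cofinite, t ∉ {t | X t ω ≤ b} :=
        hfin.eventually_cofinite_notMem
      rw [Nat.cofinite_eq_atTop] at hev
      filter_upwards [hev] with t ht
      simp only [Set.mem_setOf_eq, not_le] at ht
      omega
    have hxtop : Filter.Tendsto (fun m => xE l r (X m ω)) Filter.atTop (nhds ⊤) := by
      have h3 : Filter.Tendsto (fun m => xp l r (X m ω)) Filter.atTop Filter.atTop :=
        (xp_tendsto hC.l_pos hC.r_pos htlim).comp htend
      exact ENNReal.tendsto_ofReal_atTop.comp h3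
    rw [hxtop.liminf_eq] at h1
    exact lt_irrefl ⊤ h1
  obtain ⟨N, hN⟩ := hbdd
  exact h2 N ⟨hnever, hN⟩

end Hit

lemma enat_eventually_eq {f : ℕ → ℕ∞} {j : ℕ}
    (h : Filter.Tendsto f Filter.atTop (nhds (j:ℕ∞))) :
    ∀ᶠ m in Filter.atTop, f m = (j:ℕ∞) := by
  have h1 : nhds ((j : ℕ∞)) = pure (j : ℕ∞) := ENat.nhds_eq_pure (by simp)
  rw [h1] at h
  exact h (by simp [Set.mem_singleton_iff] : {(j:ℕ∞)} ∈ (pure (j:ℕ∞) : Filter ℕ∞))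

/-- If `t_n → ∞`, then for any non-decreasing sequence of stopping
times `T_m` with `E[T_m] < ∞` and `T_m → T_∂` a.s., `E[X_{T_m}] → 0`. -/
theorem stmt1 {Ω : Type*} [MeasurableSpace Ω] (P : Measure Ω) (X : ℕ → Ω → ℕ)
    (k : ℕ) (l r : ℕ → ℝ) (hC : IsBDChain P X k l r)
    (htlim : Tendsto (tp l r) atTop atTop)
    (T : ℕ → Ω → ℕ) (hstop : ∀ m, IsBDStop X (T m))
    (hmono : ∀ ω, Monotone fun m => T m ω)
    (hint : ∀ m, ∫⁻ ω, (T m ω : ℝ≥0∞) ∂P < ⊤)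
    (hconv : ∀ᵐ ω ∂P, Tendsto (fun m => (T m ω : ℕ∞)) atTop (nhds (hit0 X ω))) :
    Tendsto (fun m => ∫⁻ ω, (X (T m ω) ω : ℝ≥0∞) ∂P) atTop (nhds 0) := by
  classical
  haveI := hC.isProb
  have hl := hC.l_pos
  have hr := hC.r_pos
  have hXT : ∀ m, Measurable fun ω => X (T m ω) ω :=
    fun m => meas_comp hC (stop_meas hC (hstop m))
  have hXTe : ∀ m, Measurable fun ω => ((X (T m ω) ω : ℝ≥0∞)) :=
    fun m => Measurable.comp (measurable_from_top (f := fun n : ℕ => (n : ℝ≥0∞))) (hXT m)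
  have hxEmeas : Measurable (xE l r) := measurable_from_top
  have hxE2 : ∀ m, Measurable fun ω => xE l r (X (T m ω) ω) :=
    fun m => hxEmeas.comp (hXT m)
  -- pointwise a.e. convergence to 0
  have hhit := hit0_ae_finite hC htlim
  have hptwise : ∀ᵐ ω ∂P, ∀ᶠ m in Filter.atTop, X (T m ω) ω = 0 := by
    filter_upwards [hhit, hconv] with ω h1 h2
    cases hcase : hit0 X ω with
    | top => exact absurd hcase h1
    | coe j =>
      rw [hcase] at h2
      filter_upwards [enat_eventually_eq h2] with m hm
      have hTj : T m ω = j := by exact_mod_cast hm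
      rw [hTj]
      exact hit0_coe_zero hcase
  rw [ENNReal.tendsto_nhds_zero]
  intro ε hε
  set c : ℝ≥0∞ := xE l r k + 1 with hc
  have hc0 : c ≠ 0 := by simp [hc]
  have hcT : c ≠ ⊤ := by
    rw [hc]
    exact ENNReal.add_ne_top.2 ⟨ENNReal.ofReal_ne_top, ENNReal.one_ne_top⟩
  set η : ℝ≥0∞ := min (ε/2) 1 / c with hη
  have hmin0 : min (ε/2) 1 ≠ 0 := by
    simp only [ne_eq, min_eq_iff, not_or]
    constructor
    · rintro ⟨h1, -⟩
      exact (ENNReal.half_pos hε.ne').ne' h1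
    · rintro ⟨h1, -⟩
      exact one_ne_zero h1
  have hη0 : η ≠ 0 := by
    rw [hη]
    exact (ENNReal.div_pos hmin0 hcT).ne'
  have hηT : η ≠ ⊤ := by
    rw [hη]
    exact (ENNReal.div_lt_top
      (ne_top_of_le_ne_top ENNReal.one_ne_top (min_le_right _ _)) hc0).ne
  set ε' : ℝ := η.toReal with hε'def
  have hε'pos : 0 < ε' := ENNReal.toReal_pos hη0 hηT
  have hofReal : ENNReal.ofReal ε' = η := ENNReal.ofReal_toReal hηT
  obtain ⟨N, hN⟩ := xp_linear hl hr htlim hε'pos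
  -- pointwise bound and integral bound
  have hbd : ∀ m, ∫⁻ ω, ((X (T m ω) ω : ℝ≥0∞)) ∂P ≤
      (∫⁻ ω, min ((X (T m ω) ω : ℝ≥0∞)) (N:ℝ≥0∞) ∂P) + η * xE l r k := by
    intro m
    have hpt : ∀ ω, ((X (T m ω) ω : ℝ≥0∞)) ≤
        min ((X (T m ω) ω : ℝ≥0∞)) (N:ℝ≥0∞) + η * xE l r (X (T m ω) ω) := by
      intro ω
      set n := X (T m ω) ω with hn
      rcases le_or_gt n N with hcase | hcase
      · have heq : min ((n : ℝ≥0∞)) (N:ℝ≥0∞) = (n:ℝ≥0∞) :=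
          min_eq_left (by exact_mod_cast hcase)
        rw [heq]
        exact le_self_add
      · have h1 : (n : ℝ) ≤ ε' * xp l r n := hN n (by omega)
        have h2 : ((n : ℕ) : ℝ≥0∞) ≤ η * xE l r n := by
          calc ((n:ℕ) : ℝ≥0∞) = ENNReal.ofReal ((n:ℕ):ℝ) := (ENNReal.ofReal_natCast n).symm
            _ ≤ ENNReal.ofReal (ε' * xp l r n) := ENNReal.ofReal_le_ofReal h1
            _ = ENNReal.ofReal ε' * ENNReal.ofReal (xp l r n) :=
                ENNReal.ofReal_mul hε'pos.le
            _ = η * xE l r n := by rw [hofReal]; rfl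
        exact le_trans h2 le_add_self
    calc ∫⁻ ω, (X (T m ω) ω : ℝ≥0∞) ∂P
        ≤ ∫⁻ ω, (min ((X (T m ω) ω : ℝ≥0∞)) (N:ℝ≥0∞) + η * xE l r (X (T m ω) ω)) ∂P :=
          lintegral_mono hpt
      _ = (∫⁻ ω, min ((X (T m ω) ω:ℝ≥0∞)) (N:ℝ≥0∞) ∂P) +
            ∫⁻ ω, η * xE l r (X (T m ω) ω) ∂P := by
          rw [lintegral_add_left ((hXTe m).min measurable_const)]
      _ = (∫⁻ ω, min ((X (T m ω) ω:ℝ≥0∞)) (N:ℝ≥0∞) ∂P) +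
            η * ∫⁻ ω, xE l r (X (T m ω) ω) ∂P := by
          rw [lintegral_const_mul _ (hxE2 m)]
      _ ≤ (∫⁻ ω, min ((X (T m ω) ω:ℝ≥0∞)) (N:ℝ≥0∞) ∂P) + η * xE l r k :=
          add_le_add le_rfl (mul_le_mul_right (opt_stop_le hC (hstop m)) η)
  -- min part tends to 0
  have hdom : Filter.Tendsto (fun m => ∫⁻ ω, min ((X (T m ω) ω:ℝ≥0∞)) (N:ℝ≥0∞) ∂P)
      Filter.atTop (nhds 0) := by
    have h0 : nhds (0:ℝ≥0∞) = nhds (∫⁻ (_ : Ω), (0:ℝ≥0∞) ∂P) := by simp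
    rw [h0]
    refine tendsto_lintegral_of_dominated_convergence (fun _ => (N:ℝ≥0∞))
      (fun m => (hXTe m).min measurable_const)
      (fun m => Filter.Eventually.of_forall (fun ω => min_le_right _ _)) ?_ ?_
    · rw [lintegral_const, measure_univ, mul_one]
      exact ENNReal.natCast_ne_top N
    · filter_upwards [hptwise] with ω hω
      obtain ⟨M, hM⟩ := Filter.eventually_atTop.1 hω
      refine tendsto_atTop_of_eventually_const (i₀ := M) fun m hm => ?_
      rw [hM m hm]
      simp
  have hηk : η * xE l r k ≤ ε / 2 := by
    calc η * xE l r k ≤ η * c := mul_le_mul_right (by rw [hc]; exact le_self_add) η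
      _ = min (ε/2) 1 := by rw [hη]; exact ENNReal.div_mul_cancel hc0 hcT
      _ ≤ ε/2 := min_le_left _ _
  have hev2 := (ENNReal.tendsto_nhds_zero.1 hdom) (ε/2) (ENNReal.half_pos hε.ne')
  filter_upwards [hev2] with m hm
  calc ∫⁻ ω, (X (T m ω) ω:ℝ≥0∞) ∂P
      ≤ (∫⁻ ω, min ((X (T m ω) ω:ℝ≥0∞)) (N:ℝ≥0∞) ∂P) + η * xE l r k := hbd m
    _ ≤ ε/2 + ε/2 := add_le_add hm hηk
    _ = ε := ENNReal.add_halves ε
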